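/- For every pWF net N, if the transition-completion tc(N) is *-sound then N is *-sound. -/

import Mathlib

structure Net where
  P : Finset ℕ
  T : Finset ℕ
  F : Finset (ℕ × ℕ)
  I : Finset ℕ
  O : Finset ℕ

namespace Net

def nodes (N : Net) : Finset ℕ := N.P ∪ N.T

def IsPetri (N : Net) : Prop :=
  Disjoint N.P N.T ∧ ∀ e ∈ N.F, (e.1 ∈ N.P ∧ e.2 ∈ N.T) ∨ (e.1 ∈ N.T ∧ e.2 ∈ N.P)

def edge (N : Net) (x y : ℕ) : Prop := (x, y) ∈ N.F

def pathReach (N : Net) : ℕ → ℕ → Prop := Relation.ReflTransGen N.edge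

def Connected (N : Net) : Prop :=
  (∀ x ∈ N.nodes, ∃ i ∈ N.I, N.pathReach i x) ∧
  (∀ x ∈ N.nodes, ∃ o ∈ N.O, N.pathReach x o)

/-- place workflow net -/
def IsPWF (N : Net) : Prop :=
  N.IsPetri ∧ N.I ⊆ N.P ∧ N.O ⊆ N.P ∧ N.I.Nonempty ∧ N.O.Nonempty ∧ N.Connected

/-- transition workflow net -/
def IsTWF (N : Net) : Prop :=
  N.IsPetri ∧ N.I ⊆ N.T ∧ N.O ⊆ N.T ∧ N.I.Nonempty ∧ N.O.Nonempty ∧ N.Connected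

def IsWF (N : Net) : Prop := N.IsPWF ∨ N.IsTWF

abbrev Marking := ℕ → ℕ

def pre (N : Net) (t : ℕ) : Marking := fun p => if (p, t) ∈ N.F then 1 else 0
def post (N : Net) (t : ℕ) : Marking := fun p => if (t, p) ∈ N.F then 1 else 0
def enabled (N : Net) (t : ℕ) (m : Marking) : Prop := t ∈ N.T ∧ N.pre t ≤ m
def fire (N : Net) (t : ℕ) (m : Marking) : Marking := fun p => m p - N.pre t p + N.post t p
def stepRel (N : Net) (m m' : Marking) : Prop := ∃ t, N.enabled t m ∧ m' = N.fire t m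
def reach (N : Net) : Marking → Marking → Prop := Relation.ReflTransGen N.stepRel

/-- the marking with `k` tokens on each element of `S` -/
def bag (k : ℕ) (S : Finset ℕ) : Marking := fun p => if p ∈ S then k else 0

def kSound (N : Net) (k : ℕ) : Prop :=
  ∀ m, N.reach (bag k N.I) m → N.reach m (bag k N.O)

def starSound (N : Net) : Prop := ∀ k, 1 ≤ k → N.kSound k

def subSound (N : Net) : Prop :=
  ∀ k k' : ℕ, k' ≤ k → ∀ m : Marking,
    N.reach (bag k N.I) (m + bag k' N.O) → N.reach m (bag (k - k') N.O)

/-- place completion of a tWF net -/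
def pc (N : Net) (pi po : ℕ) : Net where
  P := insert pi (insert po N.P)
  T := N.T
  F := (N.I.image fun t => (pi, t)) ∪ (N.O.image fun t => (t, po)) ∪ N.F
  I := {pi}
  O := {po}

/-- transition completion of a pWF net -/
def tc (N : Net) (t_i t_o : ℕ) : Net where
  P := N.P
  T := insert t_i (insert t_o N.T)
  F := (N.I.image fun p => (t_i, p)) ∪ (N.O.image fun p => (p, t_o)) ∪ N.F
  I := {t_i}
  O := {t_o}

/-- *-soundness of a tWF net: its place completion (for fresh names) is *-sound -/
def tStarSound (N : Net) : Prop :=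
  ∀ pi po : ℕ, pi ∉ N.nodes → po ∉ N.nodes → pi ≠ po → (N.pc pi po).starSound

/-- sub-soundness of a tWF net: its place completion (for fresh names) is sub-sound -/
def tSubSound (N : Net) : Prop :=
  ∀ pi po : ℕ, pi ∉ N.nodes → po ∉ N.nodes → pi ≠ po → (N.pc pi po).subSound

/-- preset of a node, as a finset -/
def inEdges (N : Net) (n : ℕ) : Finset ℕ := (N.F.filter fun e => e.2 = n).image Prod.fst
/-- postset of a node, as a finset -/
def outEdges (N : Net) (n : ℕ) : Finset ℕ := (N.F.filter fun e => e.1 = n).image Prod.snd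

/-- substitution of the node `n` of `N` by the net `M` (place or transition substitution,
depending on the type of `n`): each input node of `M` inherits the preset of `n`, each
output node of `M` inherits the postset of `n`. -/
def subst (N : Net) (n : ℕ) (M : Net) : Net where
  P := (N.P.erase n) ∪ M.P
  T := (N.T.erase n) ∪ M.T
  F := (N.F.filter fun e => e.1 ≠ n ∧ e.2 ≠ n) ∪ M.F
        ∪ (N.inEdges n ×ˢ M.I) ∪ (M.O ×ˢ N.outEdges n)
  I := if n ∈ N.I then (N.I.erase n) ∪ M.I else N.I
  O := if n ∈ N.O then (N.O.erase n) ∪ M.O else N.O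

def Acyclic (N : Net) : Prop := ∀ x, ¬ Relation.TransGen N.edge x x

/-- AND net condition (on top of being a WF net) -/
def IsAND (N : Net) : Prop :=
  N.Acyclic ∧ ∀ p ∈ N.P,
    ((p ∈ N.I ∧ (N.inEdges p).card = 0) ∨ (p ∉ N.I ∧ (N.inEdges p).card = 1)) ∧
    ((p ∈ N.O ∧ (N.outEdges p).card = 0) ∨ (p ∉ N.O ∧ (N.outEdges p).card = 1))

/-- OR net condition (on top of being a WF net) -/
def IsOR (N : Net) : Prop :=
  ∀ t ∈ N.T,
    ((t ∈ N.I ∧ (N.inEdges t).card = 0) ∨ (t ∉ N.I ∧ (N.inEdges t).card = 1)) ∧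
    ((t ∈ N.O ∧ (N.outEdges t).card = 0) ∨ (t ∉ N.O ∧ (N.outEdges t).card = 1))

end Net

section Aux
open Net

lemma aux_reach_fix {N : Net} {p : ℕ}
    (hp : ∀ t ∈ N.T, N.pre t p = 0 ∧ N.post t p = 0) {m m' : Net.Marking}
    (h : N.reach m m') : m' p = m p := by
  induction h with
  | refl => rfl
  | tail _ hstep ih =>
      obtain ⟨t, ⟨ht, _⟩, rfl⟩ := hstep
      simp [Net.fire, (hp t ht).1, (hp t ht).2, ih]

lemma aux_reach_mono {N M : Net} (hT : N.T ⊆ M.T)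
    (hpre : ∀ t ∈ N.T, M.pre t = N.pre t) (hpost : ∀ t ∈ N.T, M.post t = N.post t)
    {m m' : Net.Marking} (h : N.reach m m') : M.reach m m' := by
  refine Relation.ReflTransGen.mono ?_ m m' h
  rintro a b ⟨t, ⟨ht, hle⟩, rfl⟩
  exact ⟨t, ⟨hT ht, by rw [hpre t ht]; exact hle⟩,
    by funext p; simp [Net.fire, hpre t ht, hpost t ht]⟩

end Aux

set_option maxHeartbeats 1000000 in
theorem stmt3 (N : Net) (hN : N.IsPWF) (t_i t_o : ℕ)
    (hti : t_i ∉ N.nodes) (hto : t_o ∉ N.nodes) (hne : t_i ≠ t_o)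
    (h : (N.tc t_i t_o).tStarSound) : N.starSound := by

  obtain ⟨hPetri, hIP, hOP, hIne, hOne, hConn⟩ := hN
  have hdisj : Disjoint N.P N.T := hPetri.1
  intro k hk m hm
  classical
  set s : Finset ℕ := N.P ∪ N.T ∪ {t_i, t_o} with hs
  have hsup : ∀ x ∈ s, x ≤ s.sup id := fun x hx => Finset.le_sup (f := id) hx
  set pi := s.sup id + 1 with hpidef
  set po := s.sup id + 2 with hpodef
  have hpis : pi ∉ s := fun hx => by have := hsup _ hx; omega
  have hpos : po ∉ s := fun hx => by have := hsup _ hx; omega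
  have hpiP : pi ∉ N.P := fun hx => hpis (by simp [hs, hx])
  have hpiT : pi ∉ N.T := fun hx => hpis (by simp [hs, hx])
  have hpoP : po ∉ N.P := fun hx => hpos (by simp [hs, hx])
  have hpoT : po ∉ N.T := fun hx => hpos (by simp [hs, hx])
  have hpiti : pi ≠ t_i := fun hx => hpis (by simp [hs, hx])
  have hpito : pi ≠ t_o := fun hx => hpis (by simp [hs, hx])
  have hpoti : po ≠ t_i := fun hx => hpos (by simp [hs, hx])
  have hpoto : po ≠ t_o := fun hx => hpos (by simp [hs, hx])
  have hpipo : pi ≠ po := by omega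
  have htiP : t_i ∉ N.P := fun hx => hti (Finset.mem_union_left _ hx)
  have htiT : t_i ∉ N.T := fun hx => hti (Finset.mem_union_right _ hx)
  have htoP : t_o ∉ N.P := fun hx => hto (Finset.mem_union_left _ hx)
  have htoT : t_o ∉ N.T := fun hx => hto (Finset.mem_union_right _ hx)
  have hpiI : pi ∉ N.I := fun hx => hpiP (hIP hx)
  have hpoI : po ∉ N.I := fun hx => hpoP (hIP hx)
  have hpiO : pi ∉ N.O := fun hx => hpiP (hOP hx)
  have hpoO : po ∉ N.O := fun hx => hpoP (hOP hx)
  have htiI : t_i ∉ N.I := fun hx => htiP (hIP hx)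
  have htoI : t_o ∉ N.I := fun hx => htoP (hIP hx)
  have htiO : t_i ∉ N.O := fun hx => htiP (hOP hx)
  have htoO : t_o ∉ N.O := fun hx => htoP (hOP hx)
  set M := (N.tc t_i t_o).pc pi po with hMdef
  have hMT : M.T = insert t_i (insert t_o N.T) := rfl
  have hMsound : M.starSound := by
    apply h pi po
    · simp only [Net.tc, Net.nodes, Finset.mem_union, Finset.mem_insert]
      push_neg
      exact ⟨hpiP, hpiti, hpito, hpiT⟩
    · simp only [Net.tc, Net.nodes, Finset.mem_union, Finset.mem_insert]
      push_neg
      exact ⟨hpoP, hpoti, hpoto, hpoT⟩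
    · omega
  have hFnode : ∀ {x y : ℕ}, (x, y) ∈ N.F → (x ∈ N.P ∨ x ∈ N.T) ∧ (y ∈ N.P ∨ y ∈ N.T) := by
    intro x y hxy
    rcases hPetri.2 _ hxy with ⟨h1, h2⟩ | ⟨h1, h2⟩ <;> exact ⟨by tauto, by tauto⟩
  have hF : ∀ x y : ℕ, ((x, y) ∈ M.F) ↔
      (x = pi ∧ y = t_i) ∨ (x = t_o ∧ y = po) ∨ (x = t_i ∧ y ∈ N.I) ∨
      (x ∈ N.O ∧ y = t_o) ∨ (x, y) ∈ N.F := by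
    intro x y
    simp only [hMdef, Net.pc, Net.tc, Finset.mem_union, Finset.mem_image,
      Finset.mem_singleton, Finset.mem_insert, Prod.mk.injEq]
    constructor
    · rintro ((⟨a, ha, h1, h2⟩ | ⟨a, ha, h1, h2⟩) |
        ((⟨a, ha, h1, h2⟩ | ⟨a, ha, h1, h2⟩) | hxy))
      · exact Or.inl ⟨h1.symm, ha ▸ h2.symm⟩
      · exact Or.inr (Or.inl ⟨ha ▸ h1.symm, h2.symm⟩)
      · exact Or.inr (Or.inr (Or.inl ⟨h1.symm, h2 ▸ ha⟩))
      · exact Or.inr (Or.inr (Or.inr (Or.inl ⟨h1 ▸ ha, h2.symm⟩)))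
      · exact Or.inr (Or.inr (Or.inr (Or.inr hxy)))
    · rintro (⟨h1, h2⟩ | ⟨h1, h2⟩ | ⟨h1, h2⟩ | ⟨h1, h2⟩ | hxy)
      · exact Or.inl (Or.inl ⟨t_i, rfl, h1.symm, h2.symm⟩)
      · exact Or.inl (Or.inr ⟨t_o, rfl, h1.symm, h2.symm⟩)
      · exact Or.inr (Or.inl (Or.inl ⟨y, h2, h1.symm, rfl⟩))
      · exact Or.inr (Or.inl (Or.inr ⟨x, h1, rfl, h2.symm⟩))
      · exact Or.inr (Or.inr hxy)
  -- pre/post of t_i in M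
  have hpre_ti : M.pre t_i = Net.bag 1 {pi} := by
    funext p
    simp only [Net.pre, Net.bag, Finset.mem_singleton]
    have : ((p, t_i) ∈ M.F) ↔ p = pi := by
      rw [hF]
      constructor
      · rintro (⟨h1, h2⟩ | ⟨h1, h2⟩ | ⟨h1, h2⟩ | ⟨h1, h2⟩ | hxy)
        · exact h1
        · exact absurd h2.symm hpoti
        · exact absurd h2 htiI
        · exact absurd h2 hne
        · rcases (hFnode hxy).2 with hh | hh
          · exact absurd hh htiP
          · exact absurd hh htiT
      · intro h1; exact Or.inl ⟨h1, rfl⟩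
    simp only [this]
  have hpost_ti : M.post t_i = Net.bag 1 N.I := by
    funext p
    simp only [Net.post, Net.bag]
    have : ((t_i, p) ∈ M.F) ↔ p ∈ N.I := by
      rw [hF]
      constructor
      · rintro (⟨h1, h2⟩ | ⟨h1, h2⟩ | ⟨h1, h2⟩ | ⟨h1, h2⟩ | hxy)
        · exact absurd h1.symm hpiti
        · exact absurd h1 hne
        · exact h2
        · exact absurd h1 htiO
        · rcases (hFnode hxy).1 with hh | hh
          · exact absurd hh htiP
          · exact absurd hh htiT
      · intro h1; exact Or.inr (Or.inr (Or.inl ⟨rfl, h1⟩))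
    simp only [this]
  have hpre_to : M.pre t_o = Net.bag 1 N.O := by
    funext p
    simp only [Net.pre, Net.bag]
    have : ((p, t_o) ∈ M.F) ↔ p ∈ N.O := by
      rw [hF]
      constructor
      · rintro (⟨h1, h2⟩ | ⟨h1, h2⟩ | ⟨h1, h2⟩ | ⟨h1, h2⟩ | hxy)
        · exact absurd h2.symm hne
        · exact absurd h2.symm hpoto
        · exact absurd h2 htoI
        · exact h1
        · rcases (hFnode hxy).2 with hh | hh
          · exact absurd hh htoP
          · exact absurd hh htoT
      · intro h1; exact Or.inr (Or.inr (Or.inr (Or.inl ⟨h1, rfl⟩)))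
    simp only [this]
  have hpost_to : M.post t_o = Net.bag 1 {po} := by
    funext p
    simp only [Net.post, Net.bag, Finset.mem_singleton]
    have : ((t_o, p) ∈ M.F) ↔ p = po := by
      rw [hF]
      constructor
      · rintro (⟨h1, h2⟩ | ⟨h1, h2⟩ | ⟨h1, h2⟩ | ⟨h1, h2⟩ | hxy)
        · exact absurd h1.symm hpito
        · exact h2
        · exact absurd h1 (fun hx => hne hx.symm)
        · exact absurd h1 htoO
        · rcases (hFnode hxy).1 with hh | hh
          · exact absurd hh htoP
          · exact absurd hh htoT
      · intro h1; exact Or.inr (Or.inl ⟨rfl, h1⟩)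
    simp only [this]
  have hpreT : ∀ t ∈ N.T, M.pre t = N.pre t := by
    intro t ht
    funext p
    simp only [Net.pre]
    have : ((p, t) ∈ M.F) ↔ (p, t) ∈ N.F := by
      rw [hF]
      constructor
      · rintro (⟨h1, h2⟩ | ⟨h1, h2⟩ | ⟨h1, h2⟩ | ⟨h1, h2⟩ | hxy)
        · exact absurd (h2 ▸ ht) htiT
        · exact absurd (h2 ▸ ht) hpoT
        · exact absurd ht (Finset.disjoint_left.mp hdisj (hIP h2))
        · exact absurd (h2 ▸ ht) htoT
        · exact hxy
      · intro h1; tauto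
    simp only [this]
  have hpostT : ∀ t ∈ N.T, M.post t = N.post t := by
    intro t ht
    funext p
    simp only [Net.post]
    have : ((t, p) ∈ M.F) ↔ (t, p) ∈ N.F := by
      rw [hF]
      constructor
      · rintro (⟨h1, h2⟩ | ⟨h1, h2⟩ | ⟨h1, h2⟩ | ⟨h1, h2⟩ | hxy)
        · exact absurd (h1 ▸ ht) hpiT
        · exact absurd (h1 ▸ ht) htoT
        · exact absurd (h1 ▸ ht) htiT
        · exact absurd ht (Finset.disjoint_left.mp hdisj (hOP h1))
        · exact hxy
      · intro h1; tauto
    simp only [this]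
  -- pre/post vanish outside N.P for N-transitions
  have hNpre0 : ∀ t ∈ N.T, ∀ p, p ∉ N.P → N.pre t p = 0 := by
    intro t ht p hp
    simp only [Net.pre, ite_eq_right_iff]
    intro hmem
    rcases hPetri.2 _ hmem with ⟨h1, _⟩ | ⟨_, h2⟩
    · exact absurd h1 hp
    · exact absurd h2 (Finset.disjoint_left.mp hdisj · ht)
  have hNpost0 : ∀ t ∈ N.T, ∀ p, p ∉ N.P → N.post t p = 0 := by
    intro t ht p hp
    simp only [Net.post, ite_eq_right_iff]
    intro hmem
    rcases hPetri.2 _ hmem with ⟨h1, _⟩ | ⟨_, h2⟩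
    · exact absurd h1 (Finset.disjoint_left.mp hdisj · ht)
    · exact absurd h2 hp
  -- markings reachable in N from bag k I vanish outside N.P
  have hm0 : ∀ p, p ∉ N.P → m p = 0 := by
    intro p hp
    have := aux_reach_fix (p := p)
      (fun t ht => ⟨hNpre0 t ht p hp, hNpost0 t ht p hp⟩) hm
    rw [this]
    simp only [Net.bag, ite_eq_right_iff]
    intro hpI; exact absurd (hIP hpI) hp
  -- Step 1: generate k tokens on N.I in M
  have hgen : ∀ j, j ≤ k →
      M.reach (Net.bag k {pi}) (fun p => Net.bag (k - j) {pi} p + Net.bag j N.I p) := by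
    intro j
    induction j with
    | zero =>
        intro _
        have he : (fun p => Net.bag (k - 0) {pi} p + Net.bag 0 N.I p) = Net.bag k {pi} := by
          funext p; simp [Net.bag]
        rw [he]
        exact Relation.ReflTransGen.refl
    | succ j ih =>
        intro hjk
        refine (ih (by omega)).tail ⟨t_i, ⟨?_, ?_⟩, ?_⟩
        · rw [hMT]; exact Finset.mem_insert_self _ _
        · rw [hpre_ti]
          intro p
          by_cases hp : p = pi
          · subst hp
            simp [Net.bag, hpiI]
            omega
          · simp [Net.bag, hp]
        · funext p
          have hfq : M.fire t_i (fun p => Net.bag (k - j) {pi} p + Net.bag j N.I p) p =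
              (Net.bag (k - j) {pi} p + Net.bag j N.I p) - Net.bag 1 {pi} p
                + Net.bag 1 N.I p := by
            rw [Net.fire, hpre_ti, hpost_ti]
          rw [hfq]
          by_cases hp : p = pi
          · subst hp
            simp [Net.bag, hpiI]
            omega
          · by_cases hpI : p ∈ N.I <;> simp [Net.bag, hp, hpI]
  have hstart : M.reach (Net.bag k {pi}) (Net.bag k N.I) := by
    have := hgen k le_rfl
    have he : (fun p => Net.bag (k - k) {pi} p + Net.bag k N.I p) = Net.bag k N.I := by
      funext p; simp [Net.bag]
    rwa [he] at this
  -- Step 2: lift the N-run to M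
  have hTsub : N.T ⊆ M.T := by
    rw [hMT]; intro t ht; exact Finset.mem_insert_of_mem (Finset.mem_insert_of_mem ht)
  have hmid : M.reach (Net.bag k N.I) m := aux_reach_mono hTsub hpreT hpostT hm
  -- Step 3: soundness of M
  have hend : M.reach m (Net.bag k {po}) := by
    have hMI : M.I = {pi} := rfl
    have hMO : M.O = {po} := rfl
    have := hMsound k hk m (by rw [hMI]; exact hstart.trans hmid)
    rwa [hMO] at this
  -- Step 4: project the M-run from m back to N
  set φ : Net.Marking → Net.Marking :=
    fun m' p => (if p ∈ N.P then m' p else 0) + (if p ∈ N.O then m' po else 0) with hφ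
  have hsim : ∀ m1 m2 : Net.Marking, M.stepRel m1 m2 → m1 pi = 0 →
      m2 pi = 0 ∧ N.reach (φ m1) (φ m2) := by
    rintro m1 m2 ⟨t, ⟨ht, hle⟩, rfl⟩ h0
    rw [hMT] at ht
    rcases Finset.mem_insert.mp ht with heq | ht
    · -- t = t_i : impossible since pi is empty
      exfalso
      have h1 := hle pi
      rw [heq, hpre_ti] at h1
      simp [Net.bag] at h1
      omega
    rcases Finset.mem_insert.mp ht with heq | ht
    · -- t = t_o : φ unchanged
      rw [heq] at hle ⊢
      have hfq : ∀ q, M.fire t_o m1 q = m1 q - Net.bag 1 N.O q + Net.bag 1 {po} q :=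
        fun q => by rw [Net.fire, hpre_to, hpost_to]
      have hfpo : M.fire t_o m1 po = m1 po + 1 := by
        rw [hfq po]; simp [Net.bag, hpoO]
      constructor
      · rw [hfq pi]
        simp [Net.bag, hpiO, hpipo]
        omega
      · have he : φ (M.fire t_o m1) = φ m1 := by
          funext p
          simp only [hφ]
          rw [hfq p, hfpo]
          by_cases hpP : p ∈ N.P
          · have hppo : p ≠ po := fun hx => hpoP (hx ▸ hpP)
            by_cases hpO : p ∈ N.O
            · have h1 : 1 ≤ m1 p := by
                have h2 := hle p
                rw [hpre_to] at h2
                simpa [Net.bag, hpO] using h2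
              simp [Net.bag, hpP, hpO, hppo]
              omega
            · simp [Net.bag, hpP, hpO, hppo]
          · have hpO : p ∉ N.O := fun hx => hpP (hOP hx)
            simp [Net.bag, hpP, hpO]
        rw [he]
        exact Relation.ReflTransGen.refl
    · -- t ∈ N.T
      have hle' : ∀ p, N.pre t p ≤ m1 p := fun p => by
        have h2 := hle p
        rwa [hpreT t ht] at h2
      have hfq : ∀ q, M.fire t m1 q = m1 q - N.pre t q + N.post t q :=
        fun q => by rw [Net.fire, hpreT t ht, hpostT t ht]
      constructor
      · rw [hfq pi, hNpre0 t ht pi hpiP, hNpost0 t ht pi hpiP]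
        omega
      · refine Relation.ReflTransGen.single ⟨t, ⟨ht, ?_⟩, ?_⟩
        · intro p
          by_cases hpP : p ∈ N.P
          · have h2 := hle' p
            simp only [hφ]
            simp [hpP]
            omega
          · rw [hNpre0 t ht p hpP]
            exact Nat.zero_le _
        · funext p
          have hfpo2 : M.fire t m1 po = m1 po := by
            rw [hfq po, hNpre0 t ht po hpoP, hNpost0 t ht po hpoP]
            omega
          simp only [hφ]
          rw [hfq p, hfpo2]
          simp only [Net.fire]
          by_cases hpP : p ∈ N.P
          · have hap := hle' p
            by_cases hpO : p ∈ N.O <;> simp [hpP, hpO] <;> omega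
          · have hpO : p ∉ N.O := fun hx => hpP (hOP hx)
            simp [hpP, hpO, hNpre0 t ht p hpP, hNpost0 t ht p hpP]
  have hback : ∀ m1 m2 : Net.Marking, M.reach m1 m2 → m1 pi = 0 →
      N.reach (φ m1) (φ m2) := by
    intro m1 m2 hr
    induction hr using Relation.ReflTransGen.head_induction_on with
    | refl => intro _; exact Relation.ReflTransGen.refl
    | head hstep _ ih =>
        intro h0
        obtain ⟨h0', hr'⟩ := hsim _ _ hstep h0
        exact hr'.trans (ih h0')
  have hfinal : N.reach (φ m) (φ (Net.bag k {po})) :=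
    hback m _ hend (hm0 pi hpiP)
  have hφm : φ m = m := by
    funext p
    by_cases hpP : p ∈ N.P
    · have : m po = 0 := hm0 po hpoP
      simp only [hφ, if_pos hpP, this]
      simp
    · have hpO : p ∉ N.O := fun hx => hpP (hOP hx)
      simp only [hφ, if_neg hpP, if_neg hpO, hm0 p hpP]
  have hφpo : φ (Net.bag k {po}) = Net.bag k N.O := by
    funext p
    simp only [hφ, Net.bag, Finset.mem_singleton]
    by_cases hpO : p ∈ N.O
    · have hpP : p ∈ N.P := hOP hpO
      have hppo : p ≠ po := fun hx => hpoP (hx ▸ hpP)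
      simp [hpP, hpO, hppo]
    · by_cases hpP : p ∈ N.P
      · have hppo : p ≠ po := fun hx => hpoP (hx ▸ hpP)
        simp [hpP, hpO, hppo]
      · simp [hpP, hpO]
  rw [hφm, hφpo] at hfinal
  exact hfinal
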